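/- Let 𝒜 be a central hyperplane arrangement and ℜ ⊆ F(𝒜). Then J(ℜ) = I(ℜ) ∩ (J(ℜ) + (x_[n])), and I(ℜ) is the unique associated prime ideal of J(ℜ) (i.e., of the S-module S/J(ℜ)) that contains none of the variables x_1, …, x_n. -/

import Mathlib

open MvPolynomial

noncomputable section

variable {K : Type*} [Field K] {n : ℕ}

open Classical in
/-- The support `supp(a) = {i : aᵢ ≠ 0}` of the linear form `∑ᵢ aᵢ xᵢ ∈ S₁`,
where linear forms of `S = K[x₁,…,xₙ]` are identified with their coefficient
vectors `a : Fin n → K`. -/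
def lsupp (a : Fin n → K) : Finset (Fin n) :=
  Finset.univ.filter (fun i => a i ≠ 0)

/-- `ι(r) = ∑_{i ∈ supp r} aᵢ · x_{supp(r) ∖ {i}}` for the linear form `r = ∑ᵢ aᵢ xᵢ`. -/
def iotaL (a : Fin n → K) : MvPolynomial (Fin n) K :=
  ∑ i ∈ lsupp a, C (a i) * ∏ j ∈ (lsupp a).erase i, X j

/-- `x_[n] = x₁⋯xₙ`. -/
def xAll (n : ℕ) (K : Type*) [Field K] : MvPolynomial (Fin n) K := ∏ i, X i

/-- `a : Fin n → K` (identified with the linear form `∑ᵢ aᵢ xᵢ ∈ S₁`) is a relation of the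
central arrangement whose hyperplanes are the kernels of the linear forms `α i`, i.e. it lies
in the kernel of the map `S₁ → V*`, `xᵢ ↦ αᵢ`. -/
def IsRel {V : Type*} [AddCommGroup V] [Module K V]
    (α : Fin n → Module.Dual K V) (a : Fin n → K) : Prop :=
  ∑ i, a i • α i = 0

/-- `J(ℜ) = (ι(r) : r ∈ ℜ)`. -/
def Jid (R : Set (Fin n → K)) : Ideal (MvPolynomial (Fin n) K) :=
  Ideal.span (iotaL '' R)

/-- `I(ℜ) = (ι(r) : r ∈ K·ℜ)`. -/
def Iid (R : Set (Fin n → K)) : Ideal (MvPolynomial (Fin n) K) :=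
  Ideal.span (iotaL '' (Submodule.span K R : Set (Fin n → K)))

/-- The Orlik–Terao ideal `I(𝒜) = (ι(r) : r ∈ F(𝒜))`. -/
def OTid {V : Type*} [AddCommGroup V] [Module K V]
    (α : Fin n → Module.Dual K V) : Ideal (MvPolynomial (Fin n) K) :=
  Ideal.span (iotaL '' {a | IsRel α a})

/-- The codimension (height) of an ideal `I`: the infimum of the heights, in the prime
spectrum, of the prime ideals containing `I`. -/
def codim {R : Type*} [CommRing R] (I : Ideal R) : ℕ∞ :=
  ⨅ p ∈ {p : PrimeSpectrum R | I ≤ p.asIdeal}, Order.height p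

-- ### Auxiliary development ###


/-- linear form in MvPolynomial from a coefficient vector, as a linear map -/
def TL (m : ℕ) : (Fin m → K) →ₗ[K] MvPolynomial (Fin m) K where
  toFun v := ∑ j, C (v j) * X j
  map_add' v w := by simp [add_mul, Finset.sum_add_distrib]
  map_smul' a v := by simp [smul_eq_C_mul, Finset.mul_sum, mul_assoc, map_mul]

lemma TL_coeff {m : ℕ} (v : Fin m → K) (j : Fin m) :
    MvPolynomial.coeff (Finsupp.single j 1) (TL m v) = v j := by
  simp [TL, coeff_sum, coeff_C_mul, coeff_X', Finsupp.single_left_inj]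

lemma TL_eq_zero {m : ℕ} {v : Fin m → K} (h : TL m v = 0) : v = 0 := by
  funext j
  have := TL_coeff v j
  rw [h] at this
  simpa using this.symm

/-- "No weak broken circuit" condition on a set Γ of indices, w.r.t. vectors c. -/
def NBC (K : Type*) [Field K] {n : ℕ} {W : Type*} [AddCommGroup W] [Module K W] (c : Fin n → W)
    (Γ : Set (Fin n)) : Prop :=
  ∀ S : Finset (Fin n), ↑S ⊆ Γ → ∀ j : Fin n, (∀ i ∈ S, j < i) →
    ¬ ∃ g : Fin n → K, ∑ i ∈ S, g i • c i = c j

lemma NBC_deletion {n : ℕ} {W : Type*} [AddCommGroup W] [Module K W]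
    {c : Fin (n+1) → W} {Γ : Set (Fin (n+1))} (h : NBC K c Γ) :
    NBC K (fun i : Fin n => c i.castSucc) {i | (i.castSucc : Fin (n+1)) ∈ Γ} := by
  rintro S hS j hj ⟨g, hg⟩
  refine h (S.map ⟨Fin.castSucc, Fin.castSucc_injective n⟩) ?_ j.castSucc ?_
    ⟨fun i' => Fin.lastCases 0 g i', ?_⟩
  · intro i' hi'
    simp only [Finset.coe_map, Set.mem_image, Finset.mem_coe,
      Function.Embedding.coeFn_mk] at hi'
    obtain ⟨i, hi, rfl⟩ := hi'
    exact hS hi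
  · intro i' hi'
    simp only [Finset.mem_map, Function.Embedding.coeFn_mk] at hi'
    obtain ⟨i, hi, rfl⟩ := hi'
    exact Fin.castSucc_lt_castSucc_iff.mpr (hj i hi)
  · rw [Finset.sum_map]
    have hcongr : ∀ i ∈ S,
        (Fin.lastCases (motive := fun _ => K) 0 g) ((⟨Fin.castSucc, Fin.castSucc_injective n⟩ : Fin n ↪ Fin (n+1)) i) • c ((⟨Fin.castSucc, Fin.castSucc_injective n⟩ : Fin n ↪ Fin (n+1)) i)
          = g i • c i.castSucc := by
      intro i hi
      simp [Fin.lastCases_castSucc]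
    rw [Finset.sum_congr rfl hcongr]
    exact hg

lemma NBC_contraction {n : ℕ} {W : Type*} [AddCommGroup W] [Module K W]
    {c : Fin (n+1) → W} {Γ : Set (Fin (n+1))} (hl : Fin.last n ∈ Γ) (h : NBC K c Γ)
    (π : W →ₗ[K] W)
    (hker : ∀ v, π v = 0 → ∃ g : K, g • c (Fin.last n) = v) :
    NBC K (fun i : Fin n => π (c i.castSucc)) {i | (i.castSucc : Fin (n+1)) ∈ Γ} := by
  rintro S hS j hj ⟨g, hg⟩
  have h0 : π (∑ i ∈ S, g i • c i.castSucc - c j.castSucc) = 0 := by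
    rw [map_sub, map_sum]
    simp only [map_smul]
    rw [hg, sub_self]
  obtain ⟨gl, hgl⟩ := hker _ h0
  have hrep : c j.castSucc = ∑ i ∈ S, g i • c i.castSucc - gl • c (Fin.last n) := by
    rw [hgl]; abel
  refine h (insert (Fin.last n) (S.map ⟨Fin.castSucc, Fin.castSucc_injective n⟩)) ?_
    j.castSucc ?_ ⟨fun i' => Fin.lastCases (-gl) g i', ?_⟩
  · intro i' hi'
    simp only [Finset.coe_insert, Set.mem_insert_iff, Finset.coe_map, Set.mem_image,
      Finset.mem_coe, Function.Embedding.coeFn_mk] at hi'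
    rcases hi' with rfl | ⟨i, hi, rfl⟩
    · exact hl
    · exact hS hi
  · intro i' hi'
    simp only [Finset.mem_insert, Finset.mem_map, Function.Embedding.coeFn_mk] at hi'
    rcases hi' with rfl | ⟨i, hi, rfl⟩
    · exact Fin.castSucc_lt_last j
    · exact Fin.castSucc_lt_castSucc_iff.mpr (hj i hi)
  · rw [Finset.sum_insert (by
      simp only [Finset.mem_map, Function.Embedding.coeFn_mk]
      rintro ⟨i, hi, hik⟩
      exact (Fin.castSucc_lt_last i).ne hik)]
    rw [Finset.sum_map]
    have hcongr : ∀ i ∈ S,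
        (Fin.lastCases (motive := fun _ => K) (-gl) g) ((⟨Fin.castSucc, Fin.castSucc_injective n⟩ : Fin n ↪ Fin (n+1)) i) • c ((⟨Fin.castSucc, Fin.castSucc_injective n⟩ : Fin n ↪ Fin (n+1)) i)
          = g i • c i.castSucc := by
      intro i hi
      simp [Fin.lastCases_castSucc]
    rw [Finset.sum_congr rfl hcongr]
    simp only [Fin.lastCases_last, neg_smul]
    rw [hrep]
    abel

set_option maxHeartbeats 1000000 in
theorem IND {m : ℕ} : ∀ (n : ℕ) (𝒩 : Finset (Fin n →₀ ℕ)) (c : Fin n → (Fin m → K)),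
    (∀ i, c i ≠ 0) → ∀ M : ℕ, (∀ ν ∈ 𝒩, ∀ i, ν i ≤ M) →
    (∀ ν ∈ 𝒩, NBC K c {i | ν i ≠ 0}) →
    ∀ lam : (Fin n →₀ ℕ) → K,
    (∑ ν ∈ 𝒩, lam ν • ∏ i, TL m (c i) ^ (M - ν i)) = 0 →
    ∀ ν ∈ 𝒩, lam ν = 0 := by
  intro n
  induction n with
  | zero =>
    intro 𝒩 c hc M hb hnbc lam heq ν hν
    have h1 : 𝒩 = {ν} := by
      apply Finset.eq_singleton_iff_unique_mem.mpr
      exact ⟨hν, fun ν' _ => Subsingleton.elim ν' ν⟩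
    rw [h1, Finset.sum_singleton] at heq
    have : (∏ i : Fin 0, TL m (c i) ^ (M - ν i)) = 1 := by simp
    rw [this, smul_eq_zero] at heq
    rcases heq with h | h
    · exact h
    · exact absurd h one_ne_zero
  | succ n ih =>
    intro 𝒩
    induction 𝒩 using Finset.strongInduction with
    | _ 𝒩 ihN =>
      intro c hc M hb hnbc lam heq ν hν
      set l := Fin.last n with hl
      set t : Fin (n+1) → MvPolynomial (Fin m) K := fun i => TL m (c i) with ht
      have htl : t l ≠ 0 := fun h => hc l (TL_eq_zero h)
      set K₀ := 𝒩.sup (fun ν' => ν' l) with hK₀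
      have hne : 𝒩.Nonempty := ⟨ν, hν⟩
      obtain ⟨ν₀, hν₀, hν₀l⟩ := Finset.exists_mem_eq_sup 𝒩 hne (fun ν' => ν' l)
      -- split product
      have hsplit : ∀ ν' : Fin (n+1) →₀ ℕ, (∏ i, t i ^ (M - ν' i)) =
          (∏ i : Fin n, t i.castSucc ^ (M - ν' i.castSucc)) * t l ^ (M - ν' l) :=
        fun ν' => Fin.prod_univ_castSucc _
      set emap : (Fin (n+1) →₀ ℕ) → (Fin n →₀ ℕ) :=
        fun ν' => Finsupp.equivFunOnFinite.symm (fun i => ν' i.castSucc) with hemap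
      have emap_apply : ∀ ν' i, emap ν' i = ν' i.castSucc := by
        intro ν' i; simp [hemap]
      set extf : (Fin n →₀ ℕ) → ℕ → (Fin (n+1) →₀ ℕ) :=
        fun w k => Finsupp.equivFunOnFinite.symm (Fin.snoc w k) with hextf
      have extf_cast : ∀ w k (i : Fin n), extf w k i.castSucc = w i := by
        intro w k i; simp [hextf]
      have extf_last : ∀ w k, extf w k l = k := by
        intro w k; simp [hextf, hl]
      have ext_emap : ∀ ν' : Fin (n+1) →₀ ℕ, ∀ k, ν' l = k → extf (emap ν') k = ν' := by
        intro ν' k hk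
        ext i
        refine Fin.lastCases ?_ ?_ i
        · rw [extf_last]; exact hk.symm
        · intro i; rw [extf_cast, emap_apply]
      have hinj : ∀ k, ∀ ν₁ ∈ 𝒩, ∀ ν₂ ∈ 𝒩, ν₁ l = k → ν₂ l = k →
          emap ν₁ = emap ν₂ → ν₁ = ν₂ := by
        intro k ν₁ _ ν₂ _ h1 h2 hem
        rw [← ext_emap ν₁ k h1, ← ext_emap ν₂ k h2, hem]
      by_cases hK : K₀ = 0
      · -- deletion case
        have hall : ∀ ν' ∈ 𝒩, ν' l = 0 := by
          intro ν' hν'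
          have h2 : ν' l ≤ K₀ := Finset.le_sup (f := fun ν' => ν' l) hν'
          omega
        have heq' : (∑ ν' ∈ 𝒩, lam ν' •
            ∏ i : Fin n, TL m (c i.castSucc) ^ (M - ν' i.castSucc)) * t l ^ M = 0 := by
          rw [Finset.sum_mul, ← heq]
          apply Finset.sum_congr rfl
          intro ν' hν'
          rw [hsplit ν', hall ν' hν', Nat.sub_zero, smul_mul_assoc]
        have hzero : (∑ ν' ∈ 𝒩, lam ν' •
            ∏ i : Fin n, TL m (c i.castSucc) ^ (M - ν' i.castSucc)) = 0 := by
          rcases mul_eq_zero.mp heq' with h | h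
          · exact h
          · exact absurd h (pow_ne_zero _ htl)
        have hb' : ∀ w ∈ 𝒩.image emap, ∀ i, w i ≤ M := by
          intro w hw i
          obtain ⟨ν', hν', rfl⟩ := Finset.mem_image.mp hw
          rw [emap_apply]; exact hb ν' hν' _
        have hnbc' : ∀ w ∈ 𝒩.image emap, NBC K (fun i : Fin n => c i.castSucc) {i | w i ≠ 0} := by
          intro w hw
          obtain ⟨ν', hν', rfl⟩ := Finset.mem_image.mp hw
          have hset : {i : Fin n | emap ν' i ≠ 0} =
              {i : Fin n | (i.castSucc : Fin (n+1)) ∈ {i' | ν' i' ≠ 0}} := by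
            ext i; simp [emap_apply]
          rw [hset]
          exact NBC_deletion (hnbc ν' hν')
        have hsum2 : ∑ w ∈ 𝒩.image emap, lam (extf w 0) •
            ∏ i : Fin n, TL m (c i.castSucc) ^ (M - w i) = 0 := by
          rw [Finset.sum_image (fun ν₁ h1 ν₂ h2 =>
            hinj 0 ν₁ h1 ν₂ h2 (hall ν₁ h1) (hall ν₂ h2))]
          rw [← hzero]
          apply Finset.sum_congr rfl
          intro ν' hν'
          rw [ext_emap ν' 0 (hall ν' hν')]
          rfl
        have hres := ih (𝒩.image emap) (fun i => c i.castSucc)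
          (fun i => hc i.castSucc) M hb' hnbc' (fun w => lam (extf w 0)) hsum2
        have := hres (emap ν) (Finset.mem_image_of_mem emap hν)
        simpa [ext_emap ν 0 (hall ν hν)] using this
      · -- contraction case
        have hK₀M : K₀ ≤ M := by
          have := hb ν₀ hν₀ l; omega
        have hpar : ∀ i : Fin n, ¬ ∃ g : K, g • c l = c i.castSucc := by
          rintro i ⟨g, hg⟩
          refine hnbc ν₀ hν₀ {l} ?_ i.castSucc ?_ ⟨fun _ => g, ?_⟩
          · intro x hx
            simp only [Finset.coe_singleton, Set.mem_singleton_iff] at hx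
            subst hx
            simp only [Set.mem_setOf_eq]
            exact fun h0 => hK (hν₀l.trans h0)
          · intro i' hi'
            simp only [Finset.mem_singleton] at hi'
            subst hi'
            exact Fin.castSucc_lt_last i
          · rw [Finset.sum_singleton]; exact hg
        obtain ⟨j₀, hj₀⟩ : ∃ j₀, c l j₀ ≠ 0 := by
          by_contra h; push_neg at h; exact hc l (funext h)
        set d : K := (c l j₀)⁻¹ with hd
        set π : (Fin m → K) →ₗ[K] (Fin m → K) :=
          LinearMap.id - (LinearMap.proj j₀).smulRight (d • c l) with hπ
        have π_apply : ∀ v, π v = v - (v j₀ * d) • c l := by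
          intro v
          simp [hπ, LinearMap.sub_apply, LinearMap.smulRight_apply, LinearMap.proj_apply,
            smul_smul]
        have hπl : π (c l) = 0 := by
          rw [π_apply, hd, mul_inv_cancel₀ hj₀, one_smul, sub_self]
        have hπker : ∀ v, π v = 0 → ∃ g : K, g • c l = v := by
          intro v hv
          rw [π_apply, sub_eq_zero] at hv
          exact ⟨v j₀ * d, hv.symm⟩
        set cb : Fin n → (Fin m → K) := fun i => π (c i.castSucc) with hcb
        have hcb0 : ∀ i, cb i ≠ 0 := by
          intro i h0
          exact hpar i (hπker _ h0)
        set ρ : MvPolynomial (Fin m) K →ₐ[K] MvPolynomial (Fin m) K :=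
          aeval (fun j => if j = j₀ then X j₀ - C d * TL m (c l) else X j) with hρ
        have hρTL : ∀ v, ρ (TL m v) = TL m (π v) := by
          intro v
          have h1 : ρ (TL m v) =
              ∑ j, C (v j) * (if j = j₀ then X j₀ - C d * TL m (c l) else X j) := by
            rw [show (TL m v : MvPolynomial (Fin m) K) = ∑ j, C (v j) * X j from rfl, map_sum]
            apply Finset.sum_congr rfl
            intro j _
            rw [map_mul, aeval_C, aeval_X, algebraMap_eq]
          have h2 : ∀ j : Fin m, C (v j) * (if j = j₀ then X j₀ - C d * TL m (c l) else X j)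
              = C (v j) * X j - (if j = j₀ then C (v j) * (C d * TL m (c l)) else 0) := by
            intro j
            by_cases h : j = j₀
            · subst h; simp [mul_sub]
            · simp [h]
          rw [h1, Finset.sum_congr rfl (fun j _ => h2 j), Finset.sum_sub_distrib,
            Finset.sum_ite_eq' Finset.univ j₀, if_pos (Finset.mem_univ j₀),
            π_apply, map_sub, map_smul, smul_eq_C_mul]
          rw [show (TL m v : MvPolynomial (Fin m) K) = ∑ j, C (v j) * X j from rfl]
          rw [map_mul, mul_assoc]
        have hρtl : ρ (t l) = 0 := by
          rw [ht]
          show ρ (TL m (c l)) = 0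
          rw [hρTL, hπl, map_zero]
        have heq1 : (∑ ν' ∈ 𝒩, lam ν' • ((∏ i : Fin n, t i.castSucc ^ (M - ν' i.castSucc))
            * t l ^ (K₀ - ν' l))) * t l ^ (M - K₀) = 0 := by
          rw [Finset.sum_mul, ← heq]
          apply Finset.sum_congr rfl
          intro ν' hν'
          have h1 : ν' l ≤ K₀ := Finset.le_sup (f := fun ν' => ν' l) hν'
          have h2 : (K₀ - ν' l) + (M - K₀) = M - ν' l := by omega
          rw [hsplit ν', smul_mul_assoc, mul_assoc, ← pow_add, h2]
        have hS1 : (∑ ν' ∈ 𝒩, lam ν' • ((∏ i : Fin n, t i.castSucc ^ (M - ν' i.castSucc))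
            * t l ^ (K₀ - ν' l))) = 0 := by
          rcases mul_eq_zero.mp heq1 with h | h
          · exact h
          · exact absurd h (pow_ne_zero _ htl)
        have hS2 : ∑ ν' ∈ 𝒩.filter (fun ν' => ν' l = K₀), lam ν' •
            ∏ i : Fin n, TL m (cb i) ^ (M - ν' i.castSucc) = 0 := by
          have hmap := congrArg ρ hS1
          rw [map_sum, map_zero] at hmap
          have this2 : ∀ ν' ∈ 𝒩, ρ (lam ν' • ((∏ i : Fin n, t i.castSucc ^ (M - ν' i.castSucc))
              * t l ^ (K₀ - ν' l)))
              = (if ν' l = K₀ then lam ν' • ∏ i : Fin n, TL m (cb i) ^ (M - ν' i.castSucc)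
                 else 0) := by
            intro ν' hν'
            have h1 : ν' l ≤ K₀ := Finset.le_sup (f := fun ν' => ν' l) hν'
            rw [map_smul, map_mul, map_pow, hρtl, map_prod]
            by_cases h : ν' l = K₀
            · rw [if_pos h]
              have h0 : K₀ - ν' l = 0 := by omega
              rw [h0, pow_zero, mul_one]
              congr 1
              apply Finset.prod_congr rfl
              intro i _
              rw [map_pow, ht]
              congr 1
              exact hρTL (c i.castSucc)
            · rw [if_neg h]
              have h0 : K₀ - ν' l ≠ 0 := by omega
              rw [zero_pow h0, mul_zero, smul_zero]
          rw [Finset.sum_congr rfl this2] at hmap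
          rwa [← Finset.sum_filter] at hmap
        set 𝒩K := 𝒩.filter (fun ν' => ν' l = K₀) with h𝒩K
        have hb' : ∀ w ∈ 𝒩K.image emap, ∀ i, w i ≤ M := by
          intro w hw i
          obtain ⟨ν', hν', rfl⟩ := Finset.mem_image.mp hw
          rw [emap_apply]
          exact hb ν' (Finset.mem_of_mem_filter ν' hν') _
        have hnbc' : ∀ w ∈ 𝒩K.image emap, NBC K cb {i | w i ≠ 0} := by
          intro w hw
          obtain ⟨ν', hν', rfl⟩ := Finset.mem_image.mp hw
          have hν'𝒩 := Finset.mem_of_mem_filter ν' hν'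
          have hν'l : ν' l = K₀ := (Finset.mem_filter.mp hν').2
          have hset : {i : Fin n | emap ν' i ≠ 0} =
              {i : Fin n | (i.castSucc : Fin (n+1)) ∈ {i' | ν' i' ≠ 0}} := by
            ext i; simp [emap_apply]
          rw [hset, hcb]
          refine NBC_contraction ?_ (hnbc ν' hν'𝒩) π hπker
          simp only [Set.mem_setOf_eq]
          exact fun h0 => hK (hν'l.symm.trans h0)
        have hsum3 : ∑ w ∈ 𝒩K.image emap, lam (extf w K₀) •
            ∏ i : Fin n, TL m (cb i) ^ (M - w i) = 0 := by
          rw [Finset.sum_image (fun ν₁ h1 ν₂ h2 =>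
            hinj K₀ ν₁ (Finset.mem_of_mem_filter ν₁ h1) ν₂ (Finset.mem_of_mem_filter ν₂ h2)
              (Finset.mem_filter.mp h1).2 (Finset.mem_filter.mp h2).2)]
          rw [← hS2]
          apply Finset.sum_congr rfl
          intro ν' hν'
          rw [ext_emap ν' K₀ (Finset.mem_filter.mp hν').2]
          rfl
        have hresK := ih (𝒩K.image emap) cb hcb0 M hb' hnbc'
          (fun w => lam (extf w K₀)) hsum3
        have hzeroK : ∀ ν' ∈ 𝒩K, lam ν' = 0 := by
          intro ν' hν'
          have := hresK (emap ν') (Finset.mem_image_of_mem emap hν')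
          simpa [ext_emap ν' K₀ (Finset.mem_filter.mp hν').2] using this
        set 𝒩₂ := 𝒩.filter (fun ν' => ¬ (ν' l = K₀)) with h𝒩₂
        have hss : 𝒩₂ ⊂ 𝒩 := by
          refine (Finset.ssubset_iff_of_subset (Finset.filter_subset _ _)).mpr ?_
          exact ⟨ν₀, hν₀, fun hmem => (Finset.mem_filter.mp hmem).2 hν₀l.symm⟩
        have heq2 : ∑ ν' ∈ 𝒩₂, lam ν' • ∏ i, t i ^ (M - ν' i) = 0 := by
          have hsplit𝒩 := Finset.sum_filter_add_sum_filter_not 𝒩 (fun ν' => ν' l = K₀)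
            (fun ν' => lam ν' • ∏ i, t i ^ (M - ν' i))
          have h1 : ∑ ν' ∈ 𝒩K, lam ν' • ∏ i, t i ^ (M - ν' i) = 0 :=
            Finset.sum_eq_zero (fun ν' hν' => by rw [hzeroK ν' hν', zero_smul])
          rw [← h𝒩K, h1, zero_add, heq] at hsplit𝒩
          rw [h𝒩₂]
          exact hsplit𝒩
        have hres2 := ihN 𝒩₂ hss c hc M
          (fun ν' hν' => hb ν' (Finset.mem_of_mem_filter ν' hν'))
          (fun ν' hν' => hnbc ν' (Finset.mem_of_mem_filter ν' hν')) lam heq2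
        by_cases hcase : ν l = K₀
        · exact hzeroK ν (Finset.mem_filter.mpr ⟨hν, hcase⟩)
        · exact hres2 ν (Finset.mem_filter.mpr ⟨hν, hcase⟩)

def indic (T : Finset (Fin n)) : Fin n →₀ ℕ :=
  Finsupp.equivFunOnFinite.symm (fun i => if i ∈ T then 1 else 0)

lemma indic_apply (T : Finset (Fin n)) (i : Fin n) :
    indic T i = if i ∈ T then 1 else 0 := by simp [indic]

lemma indic_insert {T : Finset (Fin n)} {j : Fin n} (hj : j ∉ T) :
    indic (insert j T) = Finsupp.single j 1 + indic T := by
  ext b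
  simp only [indic_apply, Finsupp.add_apply, Finsupp.single_apply, Finset.mem_insert]
  by_cases hbj : j = b
  · subst hbj; simp [hj]
  · simp [hbj, Ne.symm hbj]

lemma prodX (T : Finset (Fin n)) :
    (∏ i ∈ T, (X i : MvPolynomial (Fin n) K)) = monomial (indic T) 1 := by
  induction T using Finset.induction with
  | empty =>
    simp only [Finset.prod_empty]
    have : indic (∅ : Finset (Fin n)) = 0 := by ext b; simp [indic_apply]
    rw [this]
    simp
  | insert a T hj ih =>
    rw [Finset.prod_insert hj, ih, indic_insert hj, X, monomial_mul, mul_one]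

def mu (ν : Fin n →₀ ℕ) : ℕ := ∑ i, ν i * 2 ^ (i : ℕ)

lemma mu_add (a b : Fin n →₀ ℕ) : mu (a + b) = mu a + mu b := by
  simp [mu, add_mul, Finset.sum_add_distrib]

lemma mu_single (i : Fin n) : mu (Finsupp.single i 1) = 2 ^ (i : ℕ) := by
  rw [mu]
  rw [Finset.sum_eq_single i]
  · simp
  · intro b _ hb; simp [Finsupp.single_apply, Ne.symm hb]
  · intro h; exact absurd (Finset.mem_univ i) h

lemma mu_lt {ν : Fin n →₀ ℕ} {i j : Fin n} (hij : j < i) (hi : ν i ≠ 0) :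
    mu (ν + Finsupp.single j 1 - Finsupp.single i 1) < mu ν := by
  have key : (ν + Finsupp.single j 1 - Finsupp.single i 1) + Finsupp.single i 1
      = ν + Finsupp.single j 1 := by
    ext b
    have hne : i ≠ j := (ne_of_lt hij).symm
    simp only [Finsupp.add_apply, Finsupp.tsub_apply, Finsupp.single_apply]
    by_cases hbi : i = b
    · subst hbi
      rw [if_pos rfl, if_neg (fun h : j = i => hne h.symm)]
      omega
    · rw [if_neg hbi]
      omega
  have h2 := congrArg mu key
  rw [mu_add, mu_add] at h2
  rw [mu_single, mu_single] at h2
  have hpow : 2 ^ (j : ℕ) < 2 ^ (i : ℕ) :=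
    Nat.pow_lt_pow_right (by norm_num) hij
  omega

def NBCsub {m : ℕ} (c : Fin n → (Fin m → K)) : Submodule K (MvPolynomial (Fin n) K) where
  carrier := {g | ∀ ν ∈ g.support, NBC K c {i | ν i ≠ 0}}
  add_mem' := by
    intro p q hp hq ν hν
    rcases Finset.mem_union.mp (MvPolynomial.support_add hν) with h | h
    · exact hp ν h
    · exact hq ν h
  zero_mem' := by
    intro ν hν
    simp at hν
  smul_mem' := by
    intro a p hp ν hν
    exact hp ν (MvPolynomial.support_smul hν)

set_option maxHeartbeats 1000000 in
theorem SPAN {m : ℕ} (c : Fin n → (Fin m → K)) (hc : ∀ i, c i ≠ 0)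
    (I : Ideal (MvPolynomial (Fin n) K))
    (hrel : ∀ a : Fin n → K, (∑ i, a i • c i = 0) → iotaL a ∈ I)
    (f : MvPolynomial (Fin n) K) :
    f ∈ I.restrictScalars K ⊔ NBCsub c := by
  classical
  have hmono : ∀ N : ℕ, ∀ ν : Fin n →₀ ℕ, mu ν ≤ N →
      (monomial ν (1:K)) ∈ I.restrictScalars K ⊔ NBCsub c := by
    intro N
    induction N using Nat.strong_induction_on with
    | _ N ihN =>
      intro ν hνN
      by_cases hnbc : NBC K c {i | ν i ≠ 0}
      · apply Submodule.mem_sup_right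
        intro ν' hν'
        have : ν' = ν := by
          rw [MvPolynomial.support_monomial, if_neg one_ne_zero] at hν'
          exact Finset.mem_singleton.mp hν'
        rw [this]
        exact hnbc
      · rw [NBC] at hnbc
        push_neg at hnbc
        obtain ⟨S, hSΓ, j, hj, g, hg⟩ := hnbc
        set S₀ : Finset (Fin n) := S.filter (fun i => g i ≠ 0) with hS₀
        have hS₀sub : S₀ ⊆ S := Finset.filter_subset _ _
        have hgS₀ : ∀ i ∈ S₀, g i ≠ 0 := fun i hi => (Finset.mem_filter.mp hi).2
        have hg0 : ∑ i ∈ S₀, g i • c i = c j := by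
          rw [← hg]
          exact Finset.sum_filter_of_ne (fun i _ h => by
            intro h0; apply h; rw [h0, zero_smul])
        have hS₀Γ : ∀ i ∈ S₀, ν i ≠ 0 := fun i hi => hSΓ (hS₀sub hi)
        have hjlt : ∀ i ∈ S₀, j < i := fun i hi => hj i (hS₀sub hi)
        have hjS₀ : j ∉ S₀ := fun h => lt_irrefl j (hjlt j h)
        have hS₀ne : S₀.Nonempty := by
          by_contra h
          rw [Finset.not_nonempty_iff_eq_empty] at h
          rw [h, Finset.sum_empty] at hg0
          exact hc j hg0.symm
        -- the relation a
        set a : Fin n → K := fun i => if i = j then 1 else if i ∈ S₀ then -g i else 0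
          with ha_def
        have haj : a j = 1 := by simp [ha_def]
        have haS₀ : ∀ i ∈ S₀, a i = -g i := by
          intro i hi
          have : i ≠ j := (hjlt i hi).ne'
          simp [ha_def, this, hi]
        have ha0 : ∀ i, i ≠ j → i ∉ S₀ → a i = 0 := by
          intro i h1 h2; simp [ha_def, h1, h2]
        have hrelation : ∑ i, a i • c i = 0 := by
          have hsub : ∑ i ∈ insert j S₀, a i • c i = ∑ i, a i • c i :=
            Finset.sum_subset (Finset.subset_univ _) (fun x _ hx => by
              rw [ha0 x (fun h => hx (h ▸ Finset.mem_insert_self j S₀))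
                (fun h => hx (Finset.mem_insert_of_mem h)), zero_smul])
          rw [← hsub, Finset.sum_insert hjS₀, haj, one_smul]
          rw [Finset.sum_congr rfl (fun i hi => by rw [haS₀ i hi, neg_smul])]
          rw [Finset.sum_neg_distrib, hg0, add_neg_cancel]
        have hlsupp : lsupp a = insert j S₀ := by
          ext i
          simp only [lsupp, Finset.mem_filter, Finset.mem_univ, true_and,
            Finset.mem_insert]
          constructor
          · intro hi
            by_contra hcon
            push_neg at hcon
            exact hi (ha0 i hcon.1 hcon.2)
          · rintro (rfl | hi)
            · rw [haj]; exact one_ne_zero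
            · rw [haS₀ i hi]
              exact neg_ne_zero.mpr (hgS₀ i hi)
        -- expansion of iotaL a
        have hiota : iotaL a = monomial (indic S₀) 1
            + ∑ i ∈ S₀, (- g i) • monomial (indic ((insert j S₀).erase i)) 1 := by
          rw [iotaL, hlsupp, Finset.sum_insert hjS₀, haj, map_one, one_mul,
            Finset.erase_insert hjS₀, prodX]
          congr 1
          apply Finset.sum_congr rfl
          intro i hi
          rw [haS₀ i hi, prodX, smul_eq_C_mul]
        -- key exponent identities
        have hE1 : ν - indic S₀ + indic S₀ = ν := by
          ext b
          simp only [Finsupp.add_apply, Finsupp.tsub_apply, indic_apply]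
          by_cases hb : b ∈ S₀
          · rw [if_pos hb]
            have := hS₀Γ b hb
            omega
          · rw [if_neg hb]
            omega
        have hE2 : ∀ i ∈ S₀, ν - indic S₀ + indic ((insert j S₀).erase i)
            = ν + Finsupp.single j 1 - Finsupp.single i 1 := by
          intro i hi
          have hij : j < i := hjlt i hi
          ext b
          have hb1 : b ∈ S₀ → 1 ≤ ν b := fun hb => Nat.one_le_iff_ne_zero.mpr (hS₀Γ b hb)
          have hji : j ≠ i := hij.ne
          have hij' : i ≠ j := hij.ne'
          simp only [Finsupp.add_apply, Finsupp.tsub_apply, indic_apply,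
            Finsupp.single_apply, Finset.mem_erase, Finset.mem_insert]
          by_cases hbS : b ∈ S₀
          · have hb2 : 1 ≤ ν b := hb1 hbS
            have hbj : ¬ j = b := fun h => hjS₀ (h ▸ hbS)
            by_cases hbi : b = i
            · simp only [if_pos hbS, if_neg hbj, if_pos hbi.symm,
                if_neg (show ¬(b ≠ i ∧ (b = j ∨ b ∈ S₀)) from fun h => h.1 hbi)]
              omega
            · simp only [if_pos hbS, if_neg hbj, if_neg (fun h : i = b => hbi h.symm),
                if_pos (show (b ≠ i ∧ (b = j ∨ b ∈ S₀)) from ⟨hbi, Or.inr hbS⟩)]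
              omega
          · have hbi : ¬ i = b := fun h => hbS (h ▸ hi)
            by_cases hbj : b = j
            · simp only [if_neg hbS, if_pos hbj.symm, if_neg hbi,
                if_pos (show (b ≠ i ∧ (b = j ∨ b ∈ S₀)) from ⟨fun h => hbi h.symm, Or.inl hbj⟩)]
              omega
            · simp only [if_neg hbS, if_neg (fun h : j = b => hbj h.symm), if_neg hbi,
                if_neg (show ¬(b ≠ i ∧ (b = j ∨ b ∈ S₀)) from fun h => h.2.elim hbj hbS)]
              omega
        -- the rewriting identity
        have hkey : (monomial ν (1:K)) = monomial (ν - indic S₀) 1 * iotaL a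
            + ∑ i ∈ S₀, g i • monomial (ν + Finsupp.single j 1 - Finsupp.single i 1) (1:K) := by
          rw [hiota, mul_add, monomial_mul, mul_one, hE1, Finset.mul_sum]
          have : ∀ i ∈ S₀, (monomial (ν - indic S₀) (1:K)) * ((- g i) • monomial (indic ((insert j S₀).erase i)) 1)
              = - (g i • monomial (ν + Finsupp.single j 1 - Finsupp.single i 1) (1:K)) := by
            intro i hi
            rw [mul_smul_comm, monomial_mul, mul_one, hE2 i hi, neg_smul]
          rw [Finset.sum_congr rfl this, Finset.sum_neg_distrib]
          ring
        -- conclude membership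
        rw [hkey]
        apply Submodule.add_mem
        · apply Submodule.mem_sup_left
          show monomial (ν - indic S₀) 1 * iotaL a ∈ I
          exact Ideal.mul_mem_left I _ (hrel a hrelation)
        · apply Submodule.sum_mem
          intro i hi
          apply Submodule.smul_mem
          have hlt : mu (ν + Finsupp.single j 1 - Finsupp.single i 1) < mu ν :=
            mu_lt (hjlt i hi) (hS₀Γ i hi)
          exact ihN (mu (ν + Finsupp.single j 1 - Finsupp.single i 1)) (lt_of_lt_of_le hlt hνN) _ le_rfl
  -- general f
  rw [MvPolynomial.as_sum f]
  apply Submodule.sum_mem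
  intro ν hν
  have : monomial ν (coeff ν f) = (coeff ν f) • monomial ν (1:K) := by
    rw [MvPolynomial.smul_monomial, smul_eq_mul, mul_one]
  rw [this]
  exact Submodule.smul_mem _ _ (hmono (mu ν) ν le_rfl)


set_option maxHeartbeats 1000000 in
theorem Iid_prime (R : Set (Fin n → K))
    (he : ∀ i : Fin n, (Pi.single i 1 : Fin n → K) ∉ Submodule.span K R) :
    (Iid R).IsPrime ∧ ∀ i : Fin n, (X i : MvPolynomial (Fin n) K) ∉ Iid R := by
  classical
  set W := Submodule.span K R with hWdef
  set m := Module.finrank K ((Fin n → K) ⧸ W) with hm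
  let bas : Module.Basis (Fin m) K ((Fin n → K) ⧸ W) := Module.finBasis K _
  set q : (Fin n → K) →ₗ[K] (Fin m → K) := bas.equivFun.toLinearMap ∘ₗ W.mkQ with hq
  have hker : ∀ a : Fin n → K, q a = 0 ↔ a ∈ W := by
    intro a
    rw [hq, LinearMap.comp_apply]
    constructor
    · intro h
      have h2 : W.mkQ a = 0 := bas.equivFun.map_eq_zero_iff.mp (by simpa using h)
      rwa [Submodule.mkQ_apply, Submodule.Quotient.mk_eq_zero] at h2
    · intro h
      have : W.mkQ a = 0 := by
        rw [Submodule.mkQ_apply, Submodule.Quotient.mk_eq_zero]; exact h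
      rw [this, map_zero]
  set c : Fin n → (Fin m → K) := fun i => q (Pi.single i 1) with hcdef
  have hrepr : ∀ a : Fin n → K, (∑ i, a i • (Pi.single i (1:K) : Fin n → K)) = a := by
    intro a
    funext jj
    rw [Finset.sum_apply]
    have : ∀ i : Fin n, (a i • (Pi.single i (1:K) : Fin n → K)) jj = if jj = i then a i else 0 := by
      intro i
      rw [Pi.smul_apply, Pi.single_apply]
      by_cases h : jj = i <;> simp [h]
    rw [Finset.sum_congr rfl (fun i _ => this i), Finset.sum_ite_eq Finset.univ jj,
      if_pos (Finset.mem_univ jj)]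
  have hsum : ∀ a : Fin n → K, ∑ i, a i • c i = q a := by
    intro a
    rw [hcdef]
    calc ∑ i, a i • q (Pi.single i 1) = q (∑ i, a i • (Pi.single i (1:K) : Fin n → K)) := by
          rw [map_sum]
          exact Finset.sum_congr rfl (fun i _ => (map_smul q _ _).symm)
      _ = q a := by rw [hrepr]
  have hc : ∀ i, c i ≠ 0 := by
    intro i h0
    exact he i ((hker _).mp h0)
  set Qm := MvPolynomial (Fin m) K with hQm
  set T := FractionRing Qm with hT
  set Ψ : Qm →ₐ[K] T := IsScalarTower.toAlgHom K Qm T with hΨ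
  have hΨinj : Function.Injective Ψ := IsFractionRing.injective Qm T
  set β : Fin n → T := fun i => Ψ (TL m (c i)) with hβdef
  have hβ : ∀ i, β i ≠ 0 := by
    intro i h0
    apply hc i
    apply TL_eq_zero (m := m)
    apply hΨinj
    rw [map_zero]
    exact h0
  set φ : MvPolynomial (Fin n) K →ₐ[K] T := aeval (fun i => (β i)⁻¹) with hφdef
  have hφX : ∀ i, φ (X i) = (β i)⁻¹ := fun i => aeval_X _ i
  -- relations die under φ
  have hφiota : ∀ a : Fin n → K, a ∈ W → φ (iotaL a) = 0 := by
    intro a ha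
    have hu : (∏ j ∈ lsupp a, β j) ≠ 0 :=
      Finset.prod_ne_zero_iff.mpr (fun j _ => hβ j)
    have hmulz : (∏ j ∈ lsupp a, β j) * φ (iotaL a) = 0 := by
      rw [iotaL, map_sum, Finset.mul_sum]
      have hterm : ∀ i ∈ lsupp a,
          (∏ j ∈ lsupp a, β j) * φ (C (a i) * ∏ j ∈ (lsupp a).erase i, X j)
          = a i • β i := by
        intro i hi
        rw [map_mul, map_prod, algHom_C]
        rw [Finset.prod_congr rfl (fun j _ => hφX j)]
        rw [← Finset.mul_prod_erase _ _ hi]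
        rw [show β i * (∏ j ∈ (lsupp a).erase i, β j) * ((algebraMap K T) (a i) *
              ∏ j ∈ (lsupp a).erase i, (β j)⁻¹)
            = (algebraMap K T) (a i) * β i *
              ((∏ j ∈ (lsupp a).erase i, β j) * ∏ j ∈ (lsupp a).erase i, (β j)⁻¹) by ring]
        rw [← Finset.prod_mul_distrib]
        rw [Finset.prod_congr rfl (fun j hj => mul_inv_cancel₀ (hβ j)), Finset.prod_const_one,
          mul_one, Algebra.smul_def]
      rw [Finset.sum_congr rfl hterm]
      have hext : ∑ i ∈ lsupp a, a i • β i = ∑ i, a i • β i := by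
        apply Finset.sum_subset (Finset.subset_univ _)
        intro x _ hx
        have : a x = 0 := by
          by_contra hax
          exact hx (Finset.mem_filter.mpr ⟨Finset.mem_univ x, hax⟩)
        rw [this, zero_smul]
      rw [hext]
      have : ∑ i, a i • β i = Ψ (TL m (q a)) := by
        rw [← hsum a, map_sum, map_sum]
        apply Finset.sum_congr rfl
        intro i _
        rw [map_smul, map_smul]
      rw [this, (hker a).mpr ha, map_zero, map_zero]
    rcases mul_eq_zero.mp hmulz with h | h
    · exact absurd h hu
    · exact h
  have hsub1 : Iid R ≤ RingHom.ker φ := by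
    rw [Iid]
    apply Ideal.span_le.mpr
    rintro _ ⟨a, ha, rfl⟩
    exact hφiota a ha
  -- ker φ ≤ Iid
  have hsub2 : ∀ f, φ f = 0 → f ∈ Iid R := by
    intro f hf
    have hrel : ∀ a : Fin n → K, (∑ i, a i • c i = 0) → iotaL a ∈ Iid R := by
      intro a ha0
      have haW : a ∈ W := (hker a).mp (by rw [← hsum a]; exact ha0)
      exact Ideal.subset_span ⟨a, haW, rfl⟩
    obtain ⟨p, hp, g, hgmem, hpg⟩ := Submodule.mem_sup.mp (SPAN c hc (Iid R) hrel f)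
    have hpI : p ∈ Iid R := hp
    have hφg : φ g = 0 := by
      have hφp : φ p = 0 := hsub1 hpI
      rw [← hpg, map_add, hφp, zero_add] at hf
      exact hf
    set M := g.support.sup (fun ν : Fin n →₀ ℕ => Finset.univ.sup ⇑ν) with hM
    have hb : ∀ ν ∈ g.support, ∀ i : Fin n, ν i ≤ M := by
      intro ν hν i
      have h1 : ν i ≤ Finset.univ.sup ⇑ν := Finset.le_sup (Finset.mem_univ i)
      have h2 : Finset.univ.sup ⇑ν ≤ M :=
        Finset.le_sup (f := fun ν : Fin n →₀ ℕ => Finset.univ.sup ⇑ν) hν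
      exact le_trans h1 h2
    -- key computation
    have hgsum : (∏ i, β i ^ M) * φ g
        = Ψ (∑ ν ∈ g.support, coeff ν g • ∏ i, TL m (c i) ^ (M - ν i)) := by
      conv_lhs => rw [MvPolynomial.as_sum g]
      rw [map_sum, Finset.mul_sum, map_sum]
      apply Finset.sum_congr rfl
      intro ν hν
      rw [aeval_monomial]
      rw [Finsupp.prod_fintype _ _ (fun i => pow_zero _)]
      rw [map_smul, map_prod]
      have hfact : ∀ i : Fin n, β i ^ M * ((β i)⁻¹) ^ (ν i) = β i ^ (M - ν i) := by
        intro i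
        rw [inv_pow, pow_sub₀ _ (hβ i) (hb ν hν i)]
      calc (∏ i, β i ^ M) * ((algebraMap K T) (coeff ν g) * ∏ i, ((β i)⁻¹) ^ (ν i))
          = (algebraMap K T) (coeff ν g) * ∏ i, (β i ^ M * ((β i)⁻¹) ^ (ν i)) := by
            rw [Finset.prod_mul_distrib]; ring
        _ = (coeff ν g) • ∏ i, β i ^ (M - ν i) := by
            rw [Finset.prod_congr rfl (fun i _ => hfact i), Algebra.smul_def]
        _ = (coeff ν g) • ∏ i, Ψ (TL m (c i)) ^ (M - ν i) := rfl
        _ = (coeff ν g) • ∏ i, Ψ (TL m (c i) ^ (M - ν i)) := by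
            rw [Finset.prod_congr rfl (fun i _ => (map_pow Ψ _ _))]
    have hA : (∑ ν ∈ g.support, coeff ν g • ∏ i, TL m (c i) ^ (M - ν i)) = 0 := by
      apply hΨinj
      rw [map_zero, ← hgsum, hφg, mul_zero]
    have hcoeff : ∀ ν ∈ g.support, coeff ν g = 0 :=
      IND n g.support c hc M hb (fun ν hν => hgmem ν hν) (fun ν => coeff ν g) hA
    have hg0 : g = 0 := by
      ext ν
      by_cases hν : ν ∈ g.support
      · rw [hcoeff ν hν, coeff_zero]
      · rw [MvPolynomial.notMem_support_iff.mp hν, coeff_zero]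
    rw [← hpg, hg0, add_zero]
    exact hpI
  have hkerI : RingHom.ker φ = Iid R := by
    apply le_antisymm
    · intro f hf
      exact hsub2 f (by rwa [RingHom.mem_ker] at hf)
    · exact hsub1
  constructor
  · rw [← hkerI]
    exact RingHom.ker_isPrime φ
  · intro i hXi
    have h0 : φ (X i) = 0 := by
      have := hsub1 hXi
      rwa [RingHom.mem_ker] at this
    rw [hφX] at h0
    exact hβ i (inv_eq_zero.mp h0)

-- ### theta ###
def thetaL (n : ℕ) (K : Type*) [Field K] : (Fin n → K) →ₗ[K] MvPolynomial (Fin n) K where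
  toFun v := ∑ i, C (v i) * ∏ j ∈ Finset.univ.erase i, X j
  map_add' v w := by simp [add_mul, Finset.sum_add_distrib]
  map_smul' a v := by simp [smul_eq_C_mul, Finset.mul_sum, mul_assoc, map_mul]

lemma erase_decomp {a : Fin n → K} {i : Fin n} (hi : i ∈ lsupp a) :
    Finset.univ.erase i = (Finset.univ \ lsupp a) ∪ ((lsupp a).erase i) := by
  ext b
  simp only [Finset.mem_erase, Finset.mem_univ, and_true, Finset.mem_union,
    Finset.mem_sdiff, true_and]
  constructor
  · intro hb
    by_cases hbs : b ∈ lsupp a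
    · exact Or.inr ⟨hb, hbs⟩
    · exact Or.inl hbs
  · rintro (hb | ⟨hb, _⟩)
    · intro h; exact hb (h ▸ hi)
    · exact hb

lemma theta_eq {a : Fin n → K} :
    thetaL n K a = (∏ j ∈ Finset.univ \ lsupp a, X j) * iotaL a := by
  classical
  rw [iotaL, Finset.mul_sum]
  have h1 : thetaL n K a = ∑ i ∈ lsupp a, C (a i) * ∏ j ∈ Finset.univ.erase i, X j := by
    rw [show thetaL n K a = ∑ i, C (a i) * ∏ j ∈ Finset.univ.erase i, X j from rfl]
    symm
    apply Finset.sum_subset (Finset.subset_univ _)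
    intro x _ hx
    have : a x = 0 := by
      by_contra hax
      exact hx (Finset.mem_filter.mpr ⟨Finset.mem_univ x, hax⟩)
    rw [this, map_zero, zero_mul]
  rw [h1]
  apply Finset.sum_congr rfl
  intro i hi
  rw [erase_decomp hi, Finset.prod_union (by
    apply Finset.disjoint_left.mpr
    intro b hb hb2
    exact (Finset.mem_sdiff.mp hb).2 (Finset.mem_of_mem_erase hb2))]
  ring

lemma xAll_iota {a : Fin n → K} :
    xAll n K * iotaL a = (∏ j ∈ lsupp a, X j) * thetaL n K a := by
  rw [theta_eq, xAll]
  rw [← Finset.prod_sdiff (Finset.subset_univ (lsupp a))]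
  ring

lemma theta_mem_Jid {R : Set (Fin n → K)} {a : Fin n → K}
    (ha : a ∈ Submodule.span K R) : thetaL n K a ∈ Jid R := by
  have hsub : Submodule.span K R ≤
      Submodule.comap (thetaL n K) ((Jid R).restrictScalars K) := by
    apply Submodule.span_le.mpr
    intro r hr
    have : thetaL n K r ∈ Jid R := by
      rw [theta_eq]
      exact Ideal.mul_mem_left _ _ (Ideal.subset_span ⟨r, hr, rfl⟩)
    exact this
  exact hsub ha

lemma xAll_mul_mem {R : Set (Fin n → K)} {f : MvPolynomial (Fin n) K}
    (hf : f ∈ Iid R) : xAll n K * f ∈ Jid R := by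
  refine Submodule.span_induction ?_ ?_ ?_ ?_ hf
  · rintro _ ⟨a, ha, rfl⟩
    rw [xAll_iota]
    exact Ideal.mul_mem_left _ _ (theta_mem_Jid ha)
  · rw [mul_zero]; exact Ideal.zero_mem _
  · intro x y _ _ hx hy
    rw [mul_add]; exact Ideal.add_mem _ hx hy
  · intro r x _ hx
    rw [smul_eq_mul, show xAll n K * (r * x) = r * (xAll n K * x) by ring]
    exact Ideal.mul_mem_left _ _ hx

lemma prod_mem_prime {P : Ideal (MvPolynomial (Fin n) K)} (hP : P.IsPrime)
    {ι : Type*} (s : Finset ι) (f : ι → MvPolynomial (Fin n) K)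
    (h : (∏ i ∈ s, f i) ∈ P) : ∃ i ∈ s, f i ∈ P := by
  classical
  induction s using Finset.induction with
  | empty =>
    rw [Finset.prod_empty] at h
    exact absurd ((Ideal.eq_top_iff_one P).mpr h) hP.ne_top
  | @insert a s hx ih =>
    rw [Finset.prod_insert hx] at h
    rcases hP.mem_or_mem h with h1 | h1
    · exact ⟨a, Finset.mem_insert_self a s, h1⟩
    · obtain ⟨i, hi, hfi⟩ := ih h1
      exact ⟨i, Finset.mem_insert_of_mem hi, hfi⟩

/-- Corollary 3.3, second part (and Equation (3.4)): for a central arrangement `𝒜` and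
`ℜ ⊆ F(𝒜)`, one has `J(ℜ) = I(ℜ) ∩ (J(ℜ) + (x_[n]))`, and `I(ℜ)` is the unique associated
prime of `J(ℜ)` (i.e. of `S/J(ℜ)`) containing none of the variables `x₁,…,xₙ`. -/
theorem Jid_eq_inter_and_Iid_unique_associated_prime
    {V : Type*} [AddCommGroup V] [Module K V] [FiniteDimensional K V]
    (α : Fin n → Module.Dual K V) (hne : ∀ i, α i ≠ 0)
    (hdist : ∀ i j, i ≠ j → LinearMap.ker (α i) ≠ LinearMap.ker (α j))
    (R : Set (Fin n → K)) (hR : ∀ r ∈ R, IsRel α r) :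
    Jid R = Iid R ⊓ (Jid R ⊔ Ideal.span {xAll n K}) ∧
    Iid R ∈ associatedPrimes (MvPolynomial (Fin n) K) (MvPolynomial (Fin n) K ⧸ Jid R) ∧
    (∀ i : Fin n, (X i : MvPolynomial (Fin n) K) ∉ Iid R) ∧
    ∀ P ∈ associatedPrimes (MvPolynomial (Fin n) K) (MvPolynomial (Fin n) K ⧸ Jid R),
      (∀ i : Fin n, (X i : MvPolynomial (Fin n) K) ∉ P) → P = Iid R := by
  classical
  set LM : (Fin n → K) →ₗ[K] Module.Dual K V :=
    { toFun := fun a => ∑ i, a i • α i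
      map_add' := by intro a b; simp [add_smul, Finset.sum_add_distrib]
      map_smul' := by intro t a; simp [smul_smul, Finset.smul_sum] } with hLM
  have hRF : Submodule.span K R ≤ LinearMap.ker LM := by
    apply Submodule.span_le.mpr
    intro r hr
    rw [SetLike.mem_coe, LinearMap.mem_ker]
    exact hR r hr
  have he : ∀ i : Fin n, (Pi.single i 1 : Fin n → K) ∉ Submodule.span K R := by
    intro i hi
    have h1 : LM (Pi.single i 1) = 0 := LinearMap.mem_ker.mp (hRF hi)
    have h2 : LM (Pi.single i 1) = α i := by
      rw [hLM]
      show (∑ j, (Pi.single i 1 : Fin n → K) j • α j) = α i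
      have hterm : ∀ j : Fin n, (Pi.single i 1 : Fin n → K) j • α j
          = if j = i then α j else 0 := by
        intro j
        rw [Pi.single_apply]
        by_cases h : j = i <;> simp [h]
      rw [Finset.sum_congr rfl (fun j _ => hterm j), Finset.sum_ite_eq' Finset.univ i,
        if_pos (Finset.mem_univ i)]
    exact hne i (h2 ▸ h1)
  obtain ⟨hprime, hX⟩ := Iid_prime R he
  have hJI : Jid R ≤ Iid R := Ideal.span_mono (Set.image_mono Submodule.subset_span)
  have hxI : xAll n K ∉ Iid R := by
    intro hx
    obtain ⟨i, _, hXi⟩ := prod_mem_prime hprime Finset.univ X hx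
    exact hX i hXi
  have hann : ∀ f' a : MvPolynomial (Fin n) K,
      a ∈ (⊥ : Submodule (MvPolynomial (Fin n) K) (MvPolynomial (Fin n) K ⧸ Jid R)).colon
        {(Ideal.Quotient.mk (Jid R)) f'} ↔ a * f' ∈ Jid R := by
    intro f' a
    rw [Submodule.mem_colon_singleton, Submodule.mem_bot]
    rw [show a • (Ideal.Quotient.mk (Jid R)) f'
      = (Ideal.Quotient.mk (Jid R)) (a * f') from rfl]
    exact Ideal.Quotient.eq_zero_iff_mem
  refine ⟨?_, ?_, hX, ?_⟩
  · apply le_antisymm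
    · exact le_inf hJI le_sup_left
    · intro f hf
      rw [Submodule.mem_inf] at hf
      obtain ⟨hfI, hf2⟩ := hf
      obtain ⟨g, hg, h', hh', hsum⟩ := Submodule.mem_sup.mp hf2
      obtain ⟨h, rfl⟩ := Ideal.mem_span_singleton'.mp hh'
      have hhx : h * xAll n K ∈ Iid R := by
        have heq : h * xAll n K = f - g := by rw [← hsum]; ring
        rw [heq]
        exact Submodule.sub_mem _ hfI (hJI hg)
      have hhI : h ∈ Iid R := by
        rcases hprime.mem_or_mem hhx with h1 | h1
        · exact h1
        · exact absurd h1 hxI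
      have hhJ : h * xAll n K ∈ Jid R := by
        rw [mul_comm]
        exact xAll_mul_mem hhI
      rw [← hsum]
      exact Ideal.add_mem _ hg hhJ
  · refine AssociatedPrimes.mem_iff.mpr
      (isAssociatedPrime_iff.mpr ⟨hprime, Ideal.Quotient.mk (Jid R) (xAll n K), ?_⟩)
    ext a
    rw [hann]
    constructor
    · intro haI
      rw [mul_comm]
      exact xAll_mul_mem haI
    · intro haJ
      have h1 : a * xAll n K ∈ Iid R := hJI haJ
      rcases hprime.mem_or_mem h1 with h2 | h2
      · exact h2
      · exact absurd h2 hxI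
  · intro P hP hPX
    obtain ⟨hPprime, g0, hg0⟩ := isAssociatedPrime_iff.mp (AssociatedPrimes.mem_iff.mp hP)
    obtain ⟨f', rfl⟩ := Ideal.Quotient.mk_surjective g0
    have hmemP : ∀ a, a ∈ P ↔ a * f' ∈ Jid R := by
      intro a
      rw [hg0]
      exact hann f' a
    have hxP : xAll n K ∉ P := by
      intro hx
      obtain ⟨i, _, hXi⟩ := prod_mem_prime hPprime Finset.univ X hx
      exact hPX i hXi
    have hf'I : f' ∉ Iid R := by
      intro hf'
      exact hxP ((hmemP _).mpr (xAll_mul_mem hf'))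
    apply le_antisymm
    · intro a haP
      have h1 : a * f' ∈ Iid R := hJI ((hmemP a).mp haP)
      rcases hprime.mem_or_mem h1 with h2 | h2
      · exact h2
      · exact absurd h2 hf'I
    · intro a haI
      have h1 : (xAll n K * a) * f' ∈ Jid R :=
        Ideal.mul_mem_right f' _ (xAll_mul_mem haI)
      have h2 : xAll n K * a ∈ P := (hmemP _).mpr h1
      rcases hPprime.mem_or_mem h2 with h3 | h3
      · exact absurd h3 hxP
      · exact h3


end
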